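/- arXiv:2509.01172 — 5 statements merged into one kernel-verified Lean document; each statement's English description precedes it below -/
import Mathlib

section
/- Let n, d, m be positive integers, let each local cost f_i : ℝ^d → ℝ (i = 1,…,n) be differentiable and μ_i-strongly convex with μ_i > 0, let each constraint function g_j : ℝ^d → ℝ (j = 1,…,m) be differentiable and convex, and let υ > 0. Set μ := min{υ, μ_1, …, μ_n}. Then the primal-dual gradient map Φ of the regularized Lagrangian L is μ-strongly monotone on ℝ^{nd} × ℝ₊^m: for all w = (θ, λ) and w' = (θ', λ') with θ, θ' ∈ ℝ^{nd} and λ, λ' ∈ ℝ₊^m (componentwise nonnegative), one has ⟨Φ(w) − Φ(w'), w − w'⟩ ≥ μ ‖w − w'‖². -/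
open scoped InnerProductSpace BigOperators

open Filter

variable {E : Type*} [NormedAddCommGroup E] [InnerProductSpace ℝ E] [CompleteSpace E]

/-- Gradient inequality for a convex differentiable function. -/
lemma grad_ineq {g : E → ℝ} (hc : ConvexOn ℝ Set.univ g) {x y G : E}
    (hg : HasGradientAt g G x) :
    g x + ⟪G, y - x⟫_ℝ ≤ g y := by
  set φ : ℝ → ℝ := fun t => g (x + t • (y - x)) with hφ
  have hφ0 : φ 0 = g x := by simp [hφ]
  have hφ1 : φ 1 = g y := by simp [hφ]
  have hconv : ConvexOn ℝ Set.univ φ := by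
    have h := hc.comp_affineMap (AffineMap.lineMap x y : ℝ →ᵃ[ℝ] E)
    have he : φ = g ∘ (AffineMap.lineMap x y : ℝ →ᵃ[ℝ] E) := by
      funext t
      simp [hφ, AffineMap.lineMap_apply, add_comm]
    rw [he]
    simpa using h
  have hF : HasFDerivAt g ((InnerProductSpace.toDual ℝ E) G) x :=
    hasGradientAt_iff_hasFDerivAt.mp hg
  have hline : HasDerivAt (fun t : ℝ => x + t • (y - x)) (y - x) 0 := by
    simpa using ((hasDerivAt_id (0:ℝ)).smul_const (y - x)).const_add x
  have hd : HasDerivAt φ ⟪G, y - x⟫_ℝ 0 := by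
    have hF' : HasFDerivAt g ((InnerProductSpace.toDual ℝ E) G) ((fun t : ℝ => x + t • (y - x)) 0) := by
      simpa using hF
    have := hF'.comp_hasDerivAt 0 hline
    exact this
  have ht : Tendsto (slope φ 0) (nhdsWithin 0 (Set.Ioi 0)) (nhds ⟪G, y - x⟫_ℝ) :=
    (hasDerivAt_iff_tendsto_slope.mp hd).mono_left
      (nhdsWithin_mono _ (fun t ht => ne_of_gt ht))
  have hev : ∀ᶠ t in nhdsWithin (0:ℝ) (Set.Ioi 0), slope φ 0 t ≤ φ 1 - φ 0 := by
    filter_upwards [Ioo_mem_nhdsGT_of_mem (Set.left_mem_Ico.mpr one_pos)] with t htm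
    have := hconv.secant_mono (a := 0) (x := t) (y := 1) (Set.mem_univ _) (Set.mem_univ _)
      (Set.mem_univ _) (ne_of_gt htm.1) one_ne_zero htm.2.le
    simpa [slope_def_field] using this
  have hle : ⟪G, y - x⟫_ℝ ≤ φ 1 - φ 0 := le_of_tendsto ht hev
  rw [hφ0, hφ1] at hle
  linarith

/-- Gradient of `f x - μ/2 ‖x‖²`. -/
lemma grad_shift {f : E → ℝ} {f' : E → E} (hf : ∀ x, HasGradientAt f (f' x) x)
    (μ : ℝ) (a : E) :
    HasGradientAt (fun x => f x - μ / 2 * ‖x‖ ^ 2) (f' a - μ • a) a := by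
  rw [hasGradientAt_iff_hasFDerivAt]
  have hfa : HasFDerivAt f ((InnerProductSpace.toDual ℝ E) (f' a)) a :=
    hasGradientAt_iff_hasFDerivAt.mp (hf a)
  have hsq : HasFDerivAt (fun x : E => ⟪x, x⟫_ℝ)
      ((fderivInnerCLM ℝ ((id a : E), (id a : E))).comp
        ((ContinuousLinearMap.id ℝ E).prod (ContinuousLinearMap.id ℝ E))) a :=
    (hasFDerivAt_id a).inner ℝ (hasFDerivAt_id a)
  have hns : HasFDerivAt (fun x : E => μ / 2 * ‖x‖ ^ 2)
      ((μ / 2) • ((fderivInnerCLM ℝ ((id a : E), (id a : E))).comp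
        ((ContinuousLinearMap.id ℝ E).prod (ContinuousLinearMap.id ℝ E)))) a := by
    have : (fun x : E => μ / 2 * ‖x‖ ^ 2) = fun x : E => (μ / 2) • ⟪x, x⟫_ℝ := by
      funext x; simp [real_inner_self_eq_norm_sq, smul_eq_mul]
    rw [this]
    exact hsq.const_smul (μ / 2)
  have := hfa.sub hns
  refine this.congr_fderiv ?_
  ext v
  simp [InnerProductSpace.toDual_apply_apply, inner_sub_left, real_inner_smul_left,
    fderivInnerCLM_apply, real_inner_comm]
  ring

/-- Strong monotonicity of the gradient of a strongly convex function. -/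
lemma strong_mono {f : E → ℝ} {f' : E → E} {μ : ℝ}
    (hf : ∀ x, HasGradientAt f (f' x) x)
    (hsc : ConvexOn ℝ Set.univ (fun x => f x - μ / 2 * ‖x‖ ^ 2)) (a b : E) :
    μ * ‖a - b‖ ^ 2 ≤ ⟪f' a - f' b, a - b⟫_ℝ := by
  have h1 := grad_ineq hsc (y := b) (grad_shift hf μ a)
  have h2 := grad_ineq hsc (y := a) (grad_shift hf μ b)
  have e : ⟪f' a - f' b - μ • (a - b), a - b⟫_ℝ
      = -(⟪f' a - μ • a, b - a⟫_ℝ) - ⟪f' b - μ • b, a - b⟫_ℝ := by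
    simp only [inner_sub_left, inner_sub_right, real_inner_smul_left, real_inner_smul_right,
      real_inner_comm a b]
    ring
  have hsum : 0 ≤ ⟪f' a - f' b - μ • (a - b), a - b⟫_ℝ := by
    rw [e]; linarith
  have efin : ⟪f' a - f' b, a - b⟫_ℝ
      = ⟪f' a - f' b - μ • (a - b), a - b⟫_ℝ + μ * ‖a - b‖ ^ 2 := by
    rw [inner_sub_left (f' a - f' b), real_inner_smul_left, real_inner_self_eq_norm_sq]
    ring
  linarith


/-- Strong monotonicity of the primal-dual gradient map `Φ` of the
regularized Lagrangian `L(θ, λ) = Σ_i f_i(θ_i) + λᵀ g(θ̄) - (υ/2)‖λ‖²`: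
for componentwise nonnegative dual variables, the inner product
`⟨Φ(w) - Φ(w'), w - w'⟩` (written out blockwise) is at least `μ ‖w - w'‖²`
with `μ = min {υ, μ_1, …, μ_n}`. -/
theorem stmt0
    (n d m : ℕ) (hn : 0 < n) (hd : 0 < d) (hm : 0 < m)
    (f : Fin n → EuclideanSpace ℝ (Fin d) → ℝ)
    (f' : Fin n → EuclideanSpace ℝ (Fin d) → EuclideanSpace ℝ (Fin d))
    (μi : Fin n → ℝ) (hμi : ∀ i, 0 < μi i)
    (hf' : ∀ i x, HasGradientAt (f i) (f' i x) x)
    (hsc : ∀ i, ConvexOn ℝ Set.univ (fun x => f i x - μi i / 2 * ‖x‖ ^ 2))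
    (g : Fin m → EuclideanSpace ℝ (Fin d) → ℝ)
    (g' : Fin m → EuclideanSpace ℝ (Fin d) → EuclideanSpace ℝ (Fin d))
    (hg' : ∀ j x, HasGradientAt (g j) (g' j x) x)
    (hgconv : ∀ j, ConvexOn ℝ Set.univ (g j))
    (υ : ℝ) (hυ : 0 < υ)
    (μ : ℝ)
    (hμ : μ = min υ (Finset.univ.inf' ⟨⟨0, hn⟩, Finset.mem_univ _⟩ μi)) :
    ∀ (θ θ' : Fin n → EuclideanSpace ℝ (Fin d)) (lam lam' : Fin m → ℝ),
      (∀ j, 0 ≤ lam j) → (∀ j, 0 ≤ lam' j) →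
      (∑ i, ⟪(f' i (θ i) + (n : ℝ)⁻¹ • ∑ j, lam j • g' j ((n : ℝ)⁻¹ • ∑ i', θ i'))
              - (f' i (θ' i) + (n : ℝ)⁻¹ • ∑ j, lam' j • g' j ((n : ℝ)⁻¹ • ∑ i', θ' i')),
            θ i - θ' i⟫_ℝ)
        + ∑ j, ((-(g j ((n : ℝ)⁻¹ • ∑ i', θ i') - υ * lam j))
                 - (-(g j ((n : ℝ)⁻¹ • ∑ i', θ' i') - υ * lam' j))) * (lam j - lam' j)
      ≥ μ * ((∑ i, ‖θ i - θ' i‖ ^ 2) + ∑ j, (lam j - lam' j) ^ 2) := by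

  intro θ θ' lam lam' hlam hlam'
  set xb : EuclideanSpace ℝ (Fin d) := (n : ℝ)⁻¹ • ∑ i', θ i' with hxb
  set xb' : EuclideanSpace ℝ (Fin d) := (n : ℝ)⁻¹ • ∑ i', θ' i' with hxb'
  set S : EuclideanSpace ℝ (Fin d) := ∑ j, lam j • g' j xb with hS
  set S' : EuclideanSpace ℝ (Fin d) := ∑ j, lam' j • g' j xb' with hS'
  have hμυ : μ ≤ υ := hμ ▸ min_le_left _ _
  have hμle : ∀ i, μ ≤ μi i := fun i =>
    le_trans (hμ ▸ min_le_right _ _) (Finset.inf'_le _ (Finset.mem_univ i))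
  -- rewrite the first sum
  have hsum1 : (∑ i, ⟪(f' i (θ i) + (n : ℝ)⁻¹ • S) - (f' i (θ' i) + (n : ℝ)⁻¹ • S'),
        θ i - θ' i⟫_ℝ)
      = (∑ i, ⟪f' i (θ i) - f' i (θ' i), θ i - θ' i⟫_ℝ) + ⟪S - S', xb - xb'⟫_ℝ := by
    have hsplit : ∀ i ∈ Finset.univ, ⟪(f' i (θ i) + (n : ℝ)⁻¹ • S) - (f' i (θ' i) + (n : ℝ)⁻¹ • S'),
          θ i - θ' i⟫_ℝ
        = ⟪f' i (θ i) - f' i (θ' i), θ i - θ' i⟫_ℝ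
          + (n : ℝ)⁻¹ * ⟪S - S', θ i - θ' i⟫_ℝ := by
      intro i _
      simp only [inner_sub_left, inner_add_left, real_inner_smul_left]
      ring
    rw [Finset.sum_congr rfl hsplit, Finset.sum_add_distrib]
    congr 1
    rw [← Finset.mul_sum, ← inner_sum]
    rw [hxb, hxb', ← smul_sub, real_inner_smul_right, Finset.sum_sub_distrib]
  have hSS : ⟪S - S', xb - xb'⟫_ℝ
      = ∑ j, (lam j * ⟪g' j xb, xb - xb'⟫_ℝ - lam' j * ⟪g' j xb', xb - xb'⟫_ℝ) := by
    rw [hS, hS', inner_sub_left, sum_inner, sum_inner, ← Finset.sum_sub_distrib]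
    congr 1; funext j
    rw [real_inner_smul_left, real_inner_smul_left]
  -- per-index i inequality
  have hi : ∀ i ∈ Finset.univ, μ * ‖θ i - θ' i‖ ^ 2
      ≤ ⟪f' i (θ i) - f' i (θ' i), θ i - θ' i⟫_ℝ := by
    intro i _
    refine le_trans ?_ (strong_mono (hf' i) (hsc i) (θ i) (θ' i))
    have := sq_nonneg ‖θ i - θ' i‖
    nlinarith [hμle i]
  -- per-index j inequality
  have hj : ∀ j ∈ Finset.univ, μ * (lam j - lam' j) ^ 2
      ≤ (lam j * ⟪g' j xb, xb - xb'⟫_ℝ - lam' j * ⟪g' j xb', xb - xb'⟫_ℝ)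
        + ((-(g j xb - υ * lam j)) - (-(g j xb' - υ * lam' j))) * (lam j - lam' j) := by
    intro j _
    have hga := grad_ineq (hgconv j) (y := xb') (hg' j xb)
    have hgb := grad_ineq (hgconv j) (y := xb) (hg' j xb')
    have ea : ⟪g' j xb, xb' - xb⟫_ℝ = -⟪g' j xb, xb - xb'⟫_ℝ := by
      rw [← inner_neg_right]; congr 1; abel
    rw [ea] at hga
    have ha : g j xb - g j xb' ≤ ⟪g' j xb, xb - xb'⟫_ℝ := by linarith
    have hb : ⟪g' j xb', xb - xb'⟫_ℝ ≤ g j xb - g j xb' := by linarith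
    nlinarith [mul_nonneg (hlam j) (sub_nonneg.mpr ha),
      mul_nonneg (hlam' j) (sub_nonneg.mpr hb),
      mul_nonneg (sub_nonneg.mpr hμυ) (sq_nonneg (lam j - lam' j))]
  rw [ge_iff_le, mul_add, Finset.mul_sum, Finset.mul_sum, hsum1, hSS, add_assoc,
    ← Finset.sum_add_distrib]
  exact add_le_add (Finset.sum_le_sum hi) (Finset.sum_le_sum hj)
end

section
/- (Primal one-step descent.) Let C ⊆ ℝ^d be nonempty closed convex with diameter at most D, let γ > 0, α ∈ {0,1}, n ≥ 1, and let θ^k, θ* ∈ C. Let ∇f : ℝ^d → ℝ^d be L-Lipschitz, let A, A* ∈ ℝ^{d×m} be matrices with operator norms at most M, let λ̂, λ* ∈ ℝ^m with ‖λ̂‖ ≤ D and ‖λ*‖ ≤ D, and set h* := ∇f(θ*) + (1/n) A* λ* and 𝒢 := ∇f(θ^k) + (1/n) A λ̂. Assume θ* = P_C(θ* − γ h*). Let Z be a random variable and ∇ℓ(θ^k; Z) a random vector with E[∇ℓ(θ^k; Z)] = ∇f(θ^k) and E‖∇ℓ(θ^k; Z) − ∇f(θ^k)‖² ≤ σ²(1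 + ‖θ^k − θ*‖²). Define θ^{k+1} := P_C(θ^k − γ α (∇ℓ(θ^k; Z) + (1/n) A λ̂)). Then E‖θ^{k+1} − θ*‖² ≤ ‖θ^k − θ*‖² + C₁ γ² − 2 γ α ⟨θ^k − θ*, 𝒢 − h*⟩, where C₁ := 3(σ² + (σ² + L²) D² + 6 M² D² / n²). -/
open scoped InnerProductSpace BigOperators
open MeasureTheory

section Aux
variable {E : Type*} [NormedAddCommGroup E] [InnerProductSpace ℝ E] [CompleteSpace E]

lemma proj_var {C : Set E} (hCcv : Convex ℝ C)
    (proj : E → E) (hprojmem : ∀ x, proj x ∈ C)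
    (hprojmin : ∀ x, ∀ y ∈ C, ‖x - proj x‖ ≤ ‖x - y‖) :
    ∀ x, ∀ w ∈ C, ⟪x - proj x, w - proj x⟫_ℝ ≤ 0 := by
  intro x
  haveI : Nonempty C := ⟨⟨proj x, hprojmem x⟩⟩
  rw [← norm_eq_iInf_iff_real_inner_le_zero hCcv (hprojmem x)]
  apply le_antisymm
  · exact le_ciInf fun w => hprojmin x w w.2
  · exact ciInf_le ⟨0, fun _ ⟨_, h⟩ => h ▸ norm_nonneg _⟩ (⟨proj x, hprojmem x⟩ : C)

lemma proj_nonexp {C : Set E} (hCcv : Convex ℝ C)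
    (proj : E → E) (hprojmem : ∀ x, proj x ∈ C)
    (hprojmin : ∀ x, ∀ y ∈ C, ‖x - proj x‖ ≤ ‖x - y‖) :
    ∀ x y, ‖proj x - proj y‖ ≤ ‖x - y‖ := by
  intro x y
  have vi := proj_var hCcv proj hprojmem hprojmin
  have h1 := vi x (proj y) (hprojmem y)
  have h2 := vi y (proj x) (hprojmem x)
  set p := proj x
  set q := proj y
  have key : ‖p - q‖ ^ 2 ≤ ⟪x - y, p - q⟫_ℝ := by
    have e : ⟪x - y, p - q⟫_ℝ
        = ⟪p - q, p - q⟫_ℝ - ⟪x - p, q - p⟫_ℝ - ⟪y - q, p - q⟫_ℝ := by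
      have : x - y = (p - q) + (x - p) - (y - q) := by abel
      rw [this, inner_sub_left, inner_add_left]
      have e1 : ⟪x - p, q - p⟫_ℝ = - ⟪x - p, p - q⟫_ℝ := by
        rw [← inner_neg_right]; congr 1; abel
      linarith
    rw [e, real_inner_self_eq_norm_sq]
    linarith
  have hin := real_inner_le_norm (x - y) (p - q)
  nlinarith [norm_nonneg (p - q), norm_nonneg (x - y)]

end Aux

lemma arith1 (σ L D M N GH I : ℝ)
    (hGH : GH ≤ 2 * (L ^ 2 * D ^ 2) + 2 * (4 * M ^ 2 * D ^ 2 / N ^ 2))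
    (hI : I ≤ σ ^ 2 + σ ^ 2 * D ^ 2) (hMDN : 0 ≤ M ^ 2 * D ^ 2 / N ^ 2) :
    GH + I ≤ 3 * (σ ^ 2 + (σ ^ 2 + L ^ 2) * D ^ 2 + 6 * M ^ 2 * D ^ 2 / N ^ 2) := by
  have e1 : 2 * (4 * M ^ 2 * D ^ 2 / N ^ 2) = 8 * (M ^ 2 * D ^ 2 / N ^ 2) := by ring
  have e2 : 3 * (σ ^ 2 + (σ ^ 2 + L ^ 2) * D ^ 2 + 6 * M ^ 2 * D ^ 2 / N ^ 2)
      = 3 * σ ^ 2 + 3 * (σ ^ 2 * D ^ 2) + 3 * (L ^ 2 * D ^ 2)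
        + 18 * (M ^ 2 * D ^ 2 / N ^ 2) := by ring
  rw [e1] at hGH
  rw [e2]
  nlinarith [sq_nonneg (σ * D), sq_nonneg (L * D), sq_nonneg σ]

lemma arith2 (dk ip GH I C1 γ : ℝ) (h : GH + I ≤ C1) :
    dk - 2 * γ * ip + γ ^ 2 * GH + γ ^ 2 * I ≤ dk + C1 * γ ^ 2 - 2 * γ * ip := by
  nlinarith [mul_le_mul_of_nonneg_left h (sq_nonneg γ)]

set_option maxHeartbeats 1000000 in
/-- Primal one-step descent of the asynchronous stochastic primal-dual
algorithm: with `P_C` the nearest-point projection onto the nonempty closed convex set `C`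
(of diameter at most `D`), `θ^{k+1} = P_C(θ^k - γ α (∇ℓ(θ^k; Z) + (1/n) A λ̂))`, one has
`E‖θ^{k+1} - θ*‖² ≤ ‖θ^k - θ*‖² + C₁ γ² - 2 γ α ⟨θ^k - θ*, 𝒢 - h*⟩` with
`C₁ = 3(σ² + (σ² + L²)D² + 6M²D²/n²)`. -/
theorem stmt5
    (d m n : ℕ) (hn : 1 ≤ n)
    (C : Set (EuclideanSpace ℝ (Fin d)))
    (hCne : C.Nonempty) (hCcl : IsClosed C) (hCcv : Convex ℝ C)
    (D : ℝ) (hD : ∀ x ∈ C, ∀ y ∈ C, dist x y ≤ D)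
    (γ : ℝ) (hγ : 0 < γ) (α : ℝ) (hα : α = 0 ∨ α = 1)
    (θk θstar : EuclideanSpace ℝ (Fin d)) (hθk : θk ∈ C) (hθstar : θstar ∈ C)
    (gradf : EuclideanSpace ℝ (Fin d) → EuclideanSpace ℝ (Fin d))
    (L : ℝ) (hL : LipschitzWith (Real.toNNReal L) gradf)
    (A Astar : EuclideanSpace ℝ (Fin m) →L[ℝ] EuclideanSpace ℝ (Fin d))
    (M : ℝ) (hA : ‖A‖ ≤ M) (hAstar : ‖Astar‖ ≤ M)
    (lhat lstar : EuclideanSpace ℝ (Fin m)) (hlhat : ‖lhat‖ ≤ D) (hlstar : ‖lstar‖ ≤ D)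
    (proj : EuclideanSpace ℝ (Fin d) → EuclideanSpace ℝ (Fin d))
    (hprojmem : ∀ x, proj x ∈ C)
    (hprojmin : ∀ x, ∀ y ∈ C, ‖x - proj x‖ ≤ ‖x - y‖)
    (hfix : θstar = proj (θstar - γ • (gradf θstar + (n : ℝ)⁻¹ • Astar lstar)))
    (Ω : Type*) [MeasurableSpace Ω] (P : Measure Ω) [IsProbabilityMeasure P]
    (G : Ω → EuclideanSpace ℝ (Fin d))  -- `G ω = ∇ℓ(θ^k; Z(ω))`
    (hGmeas : Measurable G) (hGint : Integrable G P)
    (hGmean : ∫ ω, G ω ∂P = gradf θk)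
    (σ : ℝ) (hGvarint : Integrable (fun ω => ‖G ω - gradf θk‖ ^ 2) P)
    (hGvar : ∫ ω, ‖G ω - gradf θk‖ ^ 2 ∂P ≤ σ ^ 2 * (1 + ‖θk - θstar‖ ^ 2)) :
    ∫ ω, ‖proj (θk - (γ * α) • (G ω + (n : ℝ)⁻¹ • A lhat)) - θstar‖ ^ 2 ∂P
      ≤ ‖θk - θstar‖ ^ 2
        + 3 * (σ ^ 2 + (σ ^ 2 + L ^ 2) * D ^ 2 + 6 * M ^ 2 * D ^ 2 / (n : ℝ) ^ 2) * γ ^ 2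
        - 2 * γ * α * ⟪θk - θstar,
            (gradf θk + (n : ℝ)⁻¹ • A lhat)
              - (gradf θstar + (n : ℝ)⁻¹ • Astar lstar)⟫_ℝ := by
  have hD0 : (0:ℝ) ≤ D := by simpa using hD θk hθk θk hθk
  have hdk : ‖θk - θstar‖ ≤ D := by
    have := hD θk hθk θstar hθstar; rwa [dist_eq_norm] at this
  have hC1 : 0 ≤ 3 * (σ ^ 2 + (σ ^ 2 + L ^ 2) * D ^ 2 + 6 * M ^ 2 * D ^ 2 / (n : ℝ) ^ 2) := by
    positivity
  rcases hα with h0 | h1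
  · subst h0
    simp only [mul_zero, zero_smul, sub_zero, inner_zero_right]
    have hp : proj θk = θk := by
      have h := hprojmin θk θk hθk
      simp only [sub_self, norm_zero] at h
      have := norm_le_zero_iff.mp h
      rw [sub_eq_zero] at this
      exact this.symm
    rw [hp]
    rw [integral_const]
    simp only [measure_univ, probReal_univ, ENNReal.toReal_one, one_smul, smul_eq_mul, one_mul]
    nlinarith [sq_nonneg γ]
  · subst h1
    simp only [mul_one]
    set Gbar := gradf θk + (n : ℝ)⁻¹ • A lhat with hGbar
    set hstar := gradf θstar + (n : ℝ)⁻¹ • Astar lstar with hhstar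
    set v := θstar - γ • hstar with hv
    set w := (θk - θstar) - γ • (Gbar - hstar) with hw
    clear_value Gbar hstar v w
    have haint : Integrable (fun ω => G ω - gradf θk) P := hGint.sub (integrable_const _)
    have hamean : ∫ ω, (G ω - gradf θk) ∂P = 0 := by
      rw [integral_sub hGint (integrable_const _), hGmean, integral_const]
      simp
    have nonexp := proj_nonexp hCcv proj hprojmem hprojmin
    -- pointwise bound
    have hpt : ∀ ω, ‖proj (θk - γ • (G ω + (n : ℝ)⁻¹ • A lhat)) - θstar‖ ^ 2
        ≤ ‖w‖ ^ 2 + γ ^ 2 * ‖G ω - gradf θk‖ ^ 2 - 2 * γ * ⟪w, G ω - gradf θk⟫_ℝ := by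
      intro ω
      have hdiff : θk - γ • (G ω + (n : ℝ)⁻¹ • A lhat) - v = w - γ • (G ω - gradf θk) := by
        rw [hv, hw, hGbar, hhstar]; module
      have h2 : ‖proj (θk - γ • (G ω + (n : ℝ)⁻¹ • A lhat)) - θstar‖
          ≤ ‖w - γ • (G ω - gradf θk)‖ := by
        have := nonexp (θk - γ • (G ω + (n : ℝ)⁻¹ • A lhat)) v
        rw [← hfix, hdiff] at this
        exact this
      have h3 := pow_le_pow_left₀ (norm_nonneg _) h2 2
      refine h3.trans_eq ?_
      rw [norm_sub_sq_real, real_inner_smul_right, norm_smul, mul_pow]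
      simp [sq_abs]
      ring
    -- integral of rhs
    have hInner : Integrable (fun ω => ⟪w, G ω - gradf θk⟫_ℝ) P := haint.const_inner w
    have hIadd : Integrable (fun ω => ‖w‖ ^ 2 + γ ^ 2 * ‖G ω - gradf θk‖ ^ 2) P :=
      (integrable_const _).add (hGvarint.const_mul _)
    have hg : Integrable (fun ω => ‖w‖ ^ 2 + γ ^ 2 * ‖G ω - gradf θk‖ ^ 2
        - 2 * γ * ⟪w, G ω - gradf θk⟫_ℝ) P := hIadd.sub (hInner.const_mul _)
    have hIg : ∫ ω, (‖w‖ ^ 2 + γ ^ 2 * ‖G ω - gradf θk‖ ^ 2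
        - 2 * γ * ⟪w, G ω - gradf θk⟫_ℝ) ∂P
        = ‖w‖ ^ 2 + γ ^ 2 * ∫ ω, ‖G ω - gradf θk‖ ^ 2 ∂P := by
      rw [integral_sub hIadd (hInner.const_mul _),
        integral_add (integrable_const _) (hGvarint.const_mul _), integral_const,
        integral_const_mul, integral_const_mul, integral_inner haint, hamean,
        inner_zero_right]
      simp
    have hmono : ∫ ω, ‖proj (θk - γ • (G ω + (n : ℝ)⁻¹ • A lhat)) - θstar‖ ^ 2 ∂P
        ≤ ‖w‖ ^ 2 + γ ^ 2 * ∫ ω, ‖G ω - gradf θk‖ ^ 2 ∂P := by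
      rw [← hIg]
      exact integral_mono_of_nonneg (Filter.Eventually.of_forall fun ω => sq_nonneg _)
        hg (Filter.Eventually.of_forall hpt)
    refine hmono.trans ?_
    -- arithmetic
    have hwsq : ‖w‖ ^ 2 = ‖θk - θstar‖ ^ 2 - 2 * γ * ⟪θk - θstar, Gbar - hstar⟫_ℝ
        + γ ^ 2 * ‖Gbar - hstar‖ ^ 2 := by
      rw [hw, norm_sub_sq_real, real_inner_smul_right, norm_smul, mul_pow]
      simp [sq_abs]
      ring
    have hM0 : (0:ℝ) ≤ M := le_trans (norm_nonneg A) hA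
    have hN1 : (1:ℝ) ≤ (n : ℝ) := by exact_mod_cast hn
    have hN0 : (0:ℝ) < (n : ℝ) := lt_of_lt_of_le one_pos hN1
    have hb : ‖gradf θk - gradf θstar‖ ≤ max L 0 * ‖θk - θstar‖ := by
      have := hL.dist_le_mul θk θstar
      rw [dist_eq_norm, dist_eq_norm] at this
      simpa [Real.coe_toNNReal'] using this
    have hbsq : ‖gradf θk - gradf θstar‖ ^ 2 ≤ L ^ 2 * D ^ 2 := by
      have h1 : max L 0 * ‖θk - θstar‖ ≤ max L 0 * D :=
        mul_le_mul_of_nonneg_left hdk (le_max_right L 0)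
      have h2 : ‖gradf θk - gradf θstar‖ ≤ max L 0 * D := hb.trans h1
      have h3 : (max L 0) ^ 2 ≤ L ^ 2 := by
        rcases le_total L 0 with h | h
        · simp [max_eq_right h]; positivity
        · simp [max_eq_left h]
      have h4 := pow_le_pow_left₀ (norm_nonneg _) h2 2
      rw [mul_pow] at h4
      exact h4.trans (mul_le_mul_of_nonneg_right h3 (sq_nonneg D))
    have hcEq : Gbar - hstar - (gradf θk - gradf θstar)
        = (n : ℝ)⁻¹ • (A lhat - Astar lstar) := by
      rw [hGbar, hhstar]; module
    have hcnorm : ‖Gbar - hstar - (gradf θk - gradf θstar)‖ ≤ (n : ℝ)⁻¹ * (2 * M * D) := by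
      rw [hcEq, norm_smul, Real.norm_eq_abs, abs_of_nonneg (by positivity : (0:ℝ) ≤ (n:ℝ)⁻¹)]
      have h1 : ‖A lhat - Astar lstar‖ ≤ ‖A lhat‖ + ‖Astar lstar‖ := norm_sub_le _ _
      have h2 : ‖A lhat‖ ≤ M * D :=
        (A.le_opNorm lhat).trans (mul_le_mul hA hlhat (norm_nonneg _) hM0)
      have h3 : ‖Astar lstar‖ ≤ M * D :=
        (Astar.le_opNorm lstar).trans (mul_le_mul hAstar hlstar (norm_nonneg _) hM0)
      have h4 : ‖A lhat - Astar lstar‖ ≤ 2 * M * D := h1.trans (by linarith)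
      exact mul_le_mul_of_nonneg_left h4 (by positivity)
    have hcsq : ‖Gbar - hstar - (gradf θk - gradf θstar)‖ ^ 2 ≤ 4 * M ^ 2 * D ^ 2 / (n:ℝ) ^ 2 := by
      have h0 := norm_nonneg (Gbar - hstar - (gradf θk - gradf θstar))
      have h1 : ((n:ℝ)⁻¹ * (2 * M * D)) ^ 2 = 4 * M ^ 2 * D ^ 2 / (n:ℝ) ^ 2 := by
        field_simp; ring
      nlinarith [hcnorm]
    have hGHsq : ‖Gbar - hstar‖ ^ 2
        ≤ 2 * (L ^ 2 * D ^ 2) + 2 * (4 * M ^ 2 * D ^ 2 / (n:ℝ) ^ 2) := by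
      have e : (gradf θk - gradf θstar) + (Gbar - hstar - (gradf θk - gradf θstar))
          = Gbar - hstar := by abel
      have htri := norm_add_le (gradf θk - gradf θstar)
        (Gbar - hstar - (gradf θk - gradf θstar))
      rw [e] at htri
      nlinarith [norm_nonneg (gradf θk - gradf θstar),
        norm_nonneg (Gbar - hstar - (gradf θk - gradf θstar)), norm_nonneg (Gbar - hstar),
        sq_nonneg (‖gradf θk - gradf θstar‖ - ‖Gbar - hstar - (gradf θk - gradf θstar)‖)]
    have hIbound : ∫ ω, ‖G ω - gradf θk‖ ^ 2 ∂P ≤ σ ^ 2 * (1 + D ^ 2) := by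
      refine hGvar.trans ?_
      have : ‖θk - θstar‖ ^ 2 ≤ D ^ 2 := by nlinarith [norm_nonneg (θk - θstar)]
      nlinarith [sq_nonneg σ]
    have hMDN : (0:ℝ) ≤ M ^ 2 * D ^ 2 / (n:ℝ) ^ 2 := by positivity
    have hI' : ∫ ω, ‖G ω - gradf θk‖ ^ 2 ∂P ≤ σ ^ 2 + σ ^ 2 * D ^ 2 :=
      hIbound.trans_eq (by ring)
    have hfinal : ‖Gbar - hstar‖ ^ 2 + ∫ ω, ‖G ω - gradf θk‖ ^ 2 ∂P
        ≤ 3 * (σ ^ 2 + (σ ^ 2 + L ^ 2) * D ^ 2 + 6 * M ^ 2 * D ^ 2 / (n : ℝ) ^ 2) :=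
      arith1 σ L D M ((n : ℝ)) _ _ hGHsq hI' hMDN
    rw [hwsq]
    exact arith2 _ _ _ _ _ _ hfinal
end

section
/- (Dual one-step descent.) Let Λ ⊆ ℝ^m be nonempty closed convex, let γ > 0, β ∈ {0,1}, υ ≥ 0, and let λ^k, λ* ∈ Λ with ‖λ^k − λ*‖ ≤ D. Let g : ℝ^d → ℝ^m be M-Lipschitz, and let b̄, ȳ* ∈ ℝ^d with ‖b̄ − ȳ*‖ ≤ D. Assume λ* = P_Λ(λ* + γ (g(ȳ*) − υ λ*)). Define λ^{k+1} := P_Λ(λ^k + γ β (g(b̄) − υ λ^k)). Then ‖λ^{k+1} − λ*‖² ≤ ‖λ^k − λ*‖² + C₂ γ² + 2 γ β ⟨λ^k − λ*, (g(b̄) − υ λ^k) − (g(ȳ*) − υ λ*)⟩, where C₂ := 2 D² (M² + 2 υ²). -/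
open scoped InnerProductSpace BigOperators NNReal

/-- Variational inequality for the nearest-point projection onto a convex set. -/
lemma proj_var_ineq {E : Type*} [NormedAddCommGroup E] [InnerProductSpace ℝ E]
    {K : Set E} (hK : Convex ℝ K) {x p : E} (hp : p ∈ K)
    (hmin : ∀ y ∈ K, ‖x - p‖ ≤ ‖x - y‖) :
    ∀ y ∈ K, ⟪x - p, y - p⟫_ℝ ≤ 0 := by
  intro y hy
  set ip := ⟪x - p, y - p⟫_ℝ with hip
  set nsq := ‖y - p‖ ^ 2 with hnsq
  have hnsq0 : 0 ≤ nsq := sq_nonneg _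
  have key : ∀ t : ℝ, 0 < t → t ≤ 1 → 2 * ip ≤ t * nsq := by
    intro t ht ht1
    have hz : p + t • (y - p) ∈ K := by
      have h := hK hp hy (by linarith : (0:ℝ) ≤ 1 - t) ht.le (by ring)
      have : (1 - t) • p + t • y = p + t • (y - p) := by
        rw [smul_sub, sub_smul, one_smul]; abel
      rwa [this] at h
    have h1 := hmin _ hz
    have heq : x - (p + t • (y - p)) = (x - p) - t • (y - p) := by abel
    rw [heq] at h1
    have h2 : ‖x - p‖ ^ 2 ≤ ‖(x - p) - t • (y - p)‖ ^ 2 :=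
      pow_le_pow_left₀ (norm_nonneg _) h1 2
    rw [norm_sub_sq_real (x - p) (t • (y - p)), real_inner_smul_right, norm_smul,
      mul_pow, Real.norm_eq_abs, sq_abs] at h2
    have h3 : 2 * (t * ip) ≤ t ^ 2 * nsq := by nlinarith [h2]
    nlinarith [h3]
  by_contra hpos
  push_neg at hpos
  have hnsqpos : 0 < nsq := by
    rcases lt_or_eq_of_le hnsq0 with h | h
    · exact h
    · have := key 1 one_pos le_rfl
      rw [← h] at this; simp at this; linarith
  have ht : 0 < min 1 (ip / nsq) := lt_min one_pos (div_pos hpos hnsqpos)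
  have hk := key _ ht (min_le_left _ _)
  have h4 : min 1 (ip / nsq) * nsq ≤ (ip / nsq) * nsq :=
    mul_le_mul_of_nonneg_right (min_le_right _ _) hnsq0
  have h5 : (ip / nsq) * nsq = ip := div_mul_cancel₀ _ (ne_of_gt hnsqpos)
  linarith

/-- Dual one-step descent of the asynchronous primal-dual algorithm:
with `P_Λ` the nearest-point projection onto the nonempty closed convex set `Λ`,
`λ^{k+1} = P_Λ(λ^k + γ β (g(b̄) - υ λ^k))`, one has
`‖λ^{k+1} - λ*‖² ≤ ‖λ^k - λ*‖² + C₂ γ² + 2γβ⟨λ^k - λ*, (g(b̄) - υλ^k) - (g(ȳ*) - υλ*)⟩`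
with `C₂ = 2D²(M² + 2υ²)`. -/
theorem stmt6
    (d m : ℕ)
    (Λ : Set (EuclideanSpace ℝ (Fin m)))
    (hΛne : Λ.Nonempty) (hΛcl : IsClosed Λ) (hΛcv : Convex ℝ Λ)
    (γ : ℝ) (hγ : 0 < γ) (β : ℝ) (hβ : β = 0 ∨ β = 1)
    (υ : ℝ) (hυ : 0 ≤ υ)
    (lk lstar : EuclideanSpace ℝ (Fin m)) (hlk : lk ∈ Λ) (hlstar : lstar ∈ Λ)
    (D : ℝ) (hlD : ‖lk - lstar‖ ≤ D)
    (g : EuclideanSpace ℝ (Fin d) → EuclideanSpace ℝ (Fin m))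
    (M : ℝ) (hM : 0 ≤ M) (hg : LipschitzWith (Real.toNNReal M) g)
    (bbar ybar : EuclideanSpace ℝ (Fin d)) (hby : ‖bbar - ybar‖ ≤ D)
    (proj : EuclideanSpace ℝ (Fin m) → EuclideanSpace ℝ (Fin m))
    (hprojmem : ∀ x, proj x ∈ Λ)
    (hprojmin : ∀ x, ∀ y ∈ Λ, ‖x - proj x‖ ≤ ‖x - y‖)
    (hfix : lstar = proj (lstar + γ • (g ybar - υ • lstar))) :
    ‖proj (lk + (γ * β) • (g bbar - υ • lk)) - lstar‖ ^ 2
      ≤ ‖lk - lstar‖ ^ 2 + 2 * D ^ 2 * (M ^ 2 + 2 * υ ^ 2) * γ ^ 2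
        + 2 * γ * β * ⟪lk - lstar, (g bbar - υ • lk) - (g ybar - υ • lstar)⟫_ℝ := by
  have hD0 : 0 ≤ D := le_trans (norm_nonneg _) hlD
  rcases hβ with hb | hb
  · subst hb
    have hplk : proj lk = lk := by
      have h := hprojmin lk lk hlk
      simp only [sub_self, norm_zero] at h
      exact (norm_sub_eq_zero_iff.mp (le_antisymm h (norm_nonneg _))).symm
    simp only [mul_zero, zero_smul, add_zero, hplk]
    have hC : 0 ≤ 2 * D ^ 2 * (M ^ 2 + 2 * υ ^ 2) * γ ^ 2 := by positivity
    linarith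
  · subst hb
    rw [mul_one]
    set w1 := g bbar - υ • lk with hw1
    set w2 := g ybar - υ • lstar with hw2
    set u := lk + γ • w1 with hu
    set v := lstar + γ • w2 with hv
    set p := proj u with hp
    clear_value w1 w2 u v p
    have hvi1 : ⟪u - p, lstar - p⟫_ℝ ≤ 0 := by
      rw [hp]; exact proj_var_ineq hΛcv (hprojmem u) (hprojmin u) lstar hlstar
    have hvi2 : ⟪v - lstar, p - lstar⟫_ℝ ≤ 0 := by
      have h := proj_var_ineq hΛcv (hprojmem v) (hprojmin v) p (hp ▸ hprojmem u)
      rwa [← hfix] at h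
    have hkey : ‖p - lstar‖ ^ 2 ≤ ⟪u - v, p - lstar⟫_ℝ := by
      have h1 : 0 ≤ ⟪u - p, p - lstar⟫_ℝ := by
        have hsym : lstar - p = -(p - lstar) := by abel
        rw [hsym, inner_neg_right] at hvi1
        linarith
      have hdecomp : u - v = (u - p) + (p - lstar) - (v - lstar) := by abel
      rw [hdecomp, inner_sub_left, inner_add_left, real_inner_self_eq_norm_sq]
      linarith
    have hcs : ⟪u - v, p - lstar⟫_ℝ ≤ ‖u - v‖ * ‖p - lstar‖ := real_inner_le_norm _ _
    have hne : ‖p - lstar‖ ^ 2 ≤ ‖u - v‖ ^ 2 := by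
      nlinarith [norm_nonneg (p - lstar), norm_nonneg (u - v),
        sq_nonneg (‖u - v‖ - ‖p - lstar‖)]
    have hud : u - v = (lk - lstar) + γ • (w1 - w2) := by
      rw [hu, hv, hw1, hw2]; module
    have hexp : ‖u - v‖ ^ 2
        = ‖lk - lstar‖ ^ 2 + 2 * γ * ⟪lk - lstar, w1 - w2⟫_ℝ + γ ^ 2 * ‖w1 - w2‖ ^ 2 := by
      rw [hud, norm_add_sq_real, real_inner_smul_right, norm_smul, mul_pow,
        Real.norm_eq_abs, sq_abs]
      ring
    have hwd : w1 - w2 = (g bbar - g ybar) - υ • (lk - lstar) := by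
      rw [hw1, hw2]; module
    have hgl : ‖g bbar - g ybar‖ ≤ M * D := by
      have h := hg.dist_le_mul bbar ybar
      rw [dist_eq_norm, dist_eq_norm, Real.coe_toNNReal M hM] at h
      calc ‖g bbar - g ybar‖ ≤ M * ‖bbar - ybar‖ := h
        _ ≤ M * D := mul_le_mul_of_nonneg_left hby hM
    have hwb : ‖w1 - w2‖ ≤ M * D + υ * D := by
      rw [hwd]
      calc ‖(g bbar - g ybar) - υ • (lk - lstar)‖
          ≤ ‖g bbar - g ybar‖ + ‖υ • (lk - lstar)‖ := norm_sub_le _ _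
        _ ≤ M * D + υ * D := by
            rw [norm_smul, Real.norm_eq_abs, abs_of_nonneg hυ]
            exact add_le_add hgl (mul_le_mul_of_nonneg_left hlD hυ)
    have hwsq1 : ‖w1 - w2‖ ^ 2 ≤ (M * D + υ * D) ^ 2 :=
      pow_le_pow_left₀ (norm_nonneg _) hwb 2
    have hwsq : ‖w1 - w2‖ ^ 2 ≤ 2 * D ^ 2 * (M ^ 2 + 2 * υ ^ 2) := by
      nlinarith [mul_nonneg (sq_nonneg D) (sq_nonneg (M - υ)),
        mul_nonneg (sq_nonneg D) (sq_nonneg υ)]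
    have hfin := hne
    rw [hexp] at hfin
    have hγ2 : γ ^ 2 * ‖w1 - w2‖ ^ 2 ≤ 2 * D ^ 2 * (M ^ 2 + 2 * υ ^ 2) * γ ^ 2 :=
      calc γ ^ 2 * ‖w1 - w2‖ ^ 2
          ≤ γ ^ 2 * (2 * D ^ 2 * (M ^ 2 + 2 * υ ^ 2)) :=
            mul_le_mul_of_nonneg_left hwsq (sq_nonneg γ)
        _ = 2 * D ^ 2 * (M ^ 2 + 2 * υ ^ 2) * γ ^ 2 := by ring
    linarith
end

section
/- (Auxiliary step-size lemma.) Let a > 0 and p be a positive integer, and let (γ_k)_{k≥1} be a non-increasing sequence with 0 < γ_k ≤ min{1, 1/a} for all k, satisfying γ_{k−1}^p / γ_k^p ≤ 1 + (a/2) γ_k^p for all k ≥ 2. Then for every k ≥ 1, Σ_{j=1}^{k} γ_j^{p+1} ∏_{ℓ=j+1}^{k} (1 − a γ_ℓ) ≤ (2/a) γ_k^p. -/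
open scoped BigOperators

/-- Auxiliary step-size lemma: for `a > 0`, a positive integer `p`, and a
non-increasing sequence `(γ_k)` with `0 < γ_k ≤ min{1, 1/a}` and
`γ_{k-1}^p / γ_k^p ≤ 1 + (a/2) γ_k^p` for `k ≥ 2`, one has for every `k ≥ 1`
`Σ_{j=1}^k γ_j^{p+1} Π_{ℓ=j+1}^k (1 - a γ_ℓ) ≤ (2/a) γ_k^p`. -/
theorem stmt12
    (a : ℝ) (ha : 0 < a) (p : ℕ) (hp : 0 < p)
    (γ : ℕ → ℝ) (hγmono : Antitone γ)
    (hγpos : ∀ k, 0 < γ k) (hγle : ∀ k, γ k ≤ min 1 (1 / a))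
    (hratio : ∀ k, 2 ≤ k → γ (k - 1) ^ p / γ k ^ p ≤ 1 + a / 2 * γ k ^ p) :
    ∀ k, 1 ≤ k →
      ∑ j ∈ Finset.Icc 1 k, γ j ^ (p + 1) * ∏ l ∈ Finset.Icc (j + 1) k, (1 - a * γ l)
        ≤ 2 / a * γ k ^ p := by
  intro k hk
  induction k, hk using Nat.le_induction with
  | base =>
    have h1a : γ 1 ≤ 1 / a := (hγle 1).trans (min_le_right _ _)
    have hpos := hγpos 1
    have hpp : (0:ℝ) < γ 1 ^ p := pow_pos hpos p
    have he : Finset.Icc 2 1 = (∅ : Finset ℕ) := by decide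
    simp only [Finset.Icc_self, Finset.sum_singleton, he, Finset.prod_empty, mul_one]
    have : γ 1 ^ (p + 1) = γ 1 ^ p * γ 1 := pow_succ _ _
    rw [this]
    have h1a' : γ 1 * a ≤ 1 := (le_div_iff₀ ha).mp h1a
    rw [div_mul_eq_mul_div, le_div_iff₀ ha]
    nlinarith
  | succ k hk ih =>
    have hsum : ∑ j ∈ Finset.Icc 1 (k+1), γ j ^ (p + 1) *
        ∏ l ∈ Finset.Icc (j + 1) (k+1), (1 - a * γ l)
        = (∑ j ∈ Finset.Icc 1 k, γ j ^ (p + 1) *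
            ∏ l ∈ Finset.Icc (j + 1) k, (1 - a * γ l)) * (1 - a * γ (k+1))
          + γ (k+1) ^ (p+1) := by
      rw [Finset.sum_Icc_succ_top (by omega : 1 ≤ k+1)]
      have hlast : Finset.Icc (k+1+1) (k+1) = (∅ : Finset ℕ) := by
        apply Finset.Icc_eq_empty; omega
      rw [hlast, Finset.prod_empty, mul_one, Finset.sum_mul]
      congr 1
      apply Finset.sum_congr rfl
      intro j hj
      rw [Finset.mem_Icc] at hj
      rw [Finset.prod_Icc_succ_top (by omega : j+1 ≤ k+1), mul_assoc]
    rw [hsum]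
    set g := γ (k+1) with hg
    have hgpos := hγpos (k+1)
    have hga : g ≤ 1 / a := (hγle (k+1)).trans (min_le_right _ _)
    have hga' : a * g ≤ 1 := by
      have := (le_div_iff₀ ha).mp hga
      linarith
    have hg1 : g ≤ 1 := (hγle (k+1)).trans (min_le_left _ _)
    have hcontr : 0 ≤ 1 - a * g := by linarith
    have hratio' := hratio (k+1) (by omega)
    simp only [Nat.add_sub_cancel] at hratio'
    have htpos : (0:ℝ) < g ^ p := pow_pos hgpos p
    have hkp : γ k ^ p ≤ g ^ p * (1 + a / 2 * g ^ p) := by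
      rw [div_le_iff₀ htpos] at hratio'
      linarith [hratio']
    have hgp_le : g ^ p ≤ g := by
      calc g ^ p ≤ g ^ 1 := pow_le_pow_of_le_one (le_of_lt hgpos) hg1 hp
        _ = g := pow_one g
    have hstep1 : (∑ j ∈ Finset.Icc 1 k, γ j ^ (p + 1) *
        ∏ l ∈ Finset.Icc (j + 1) k, (1 - a * γ l)) * (1 - a * g)
        ≤ 2 / a * γ k ^ p * (1 - a * g) :=
      mul_le_mul_of_nonneg_right ih hcontr
    have hgp1 : g ^ (p+1) = g ^ p * g := pow_succ _ _
    have h2a : (0:ℝ) < 2 / a := by positivity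
    -- goal: ... + g^(p+1) ≤ 2/a * g^p
    have key : 2 / a * γ k ^ p * (1 - a * g) + g ^ p * g ≤ 2 / a * g ^ p := by
      have h1 : 2 / a * γ k ^ p * (1 - a * g) ≤
          2 / a * (g ^ p * (1 + a / 2 * g ^ p)) * (1 - a * g) := by
        apply mul_le_mul_of_nonneg_right _ hcontr
        exact mul_le_mul_of_nonneg_left hkp (le_of_lt h2a)
      have h2 : 2 / a * (g ^ p * (1 + a / 2 * g ^ p)) * (1 - a * g) + g ^ p * g
          ≤ 2 / a * g ^ p := by
        have hda : 2 / a * (a / 2) = 1 := by field_simp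
        have expand : 2 / a * (g ^ p * (1 + a / 2 * g ^ p)) * (1 - a * g)
            = 2 / a * g ^ p * (1 - a * g) + g ^ p * g ^ p * (1 - a * g) := by
          field_simp
        rw [expand]
        have h3 : 2 / a * g ^ p * (1 - a * g) = 2 / a * g ^ p - 2 * (g ^ p * g) := by
          field_simp
        rw [h3]
        have h4a : g ^ p * (1 - a * g) ≤ g := by
          have h0 : 1 - a * g ≤ 1 := by nlinarith
          have h5 : g ^ p * (1 - a * g) ≤ g ^ p * 1 :=
            mul_le_mul_of_nonneg_left h0 htpos.le
          rw [mul_one] at h5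
          exact h5.trans hgp_le
        have h4 : g ^ p * g ^ p * (1 - a * g) ≤ g ^ p * g := by
          calc g ^ p * g ^ p * (1 - a * g) = g ^ p * (g ^ p * (1 - a * g)) := by ring
            _ ≤ g ^ p * g := mul_le_mul_of_nonneg_left h4a htpos.le
        linarith
      linarith
    rw [hgp1]
    linarith
end

section
/- (Windowed recursion bound; deterministic skeleton of the main theorem.) Let a > 0, C ≥ 0, and B a positive integer. Let (γ_k)_{k≥1} be positive and non-increasing with a γ_k ≤ 1 for all k and γ_{s−B} / γ_s ≤ 1 + (a/2) γ_s for all s ≥ 1, under the convention γ_j := γ_1 for all j ≤ 0. Let (Δ^k)_{k≥0} be nonnegative reals satisfying, for all k ≥ 0, Δ^{k+1} ≤ (1 − a γ_{k−B+2}) Δ^{max(k−B+1, 0)} + C γ_{k−B+2}². Then for every k ≥ 0, Δ^{k+1} ≤ ∏_{i=1}^{q} (1 − a γ_{k−iB+2}) · Δ^0 + (2C/a) γ_{k−B+2}, where q = ⌊(k+1)/B⌋. -/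
open scoped BigOperators

/-- Windowed recursion bound (deterministic skeleton of the main theorem):
if the nonnegative reals `Δ^k` satisfy
`Δ^{k+1} ≤ (1 - a γ_{k-B+2}) Δ^{max(k-B+1, 0)} + C γ_{k-B+2}²`
for a positive non-increasing step-size sequence `γ : ℤ → ℝ` with `γ_j = γ_1` for `j ≤ 0`,
`a γ_j ≤ 1`, and `γ_{s-B}/γ_s ≤ 1 + (a/2) γ_s` for `s ≥ 1`, then for every `k`
`Δ^{k+1} ≤ Π_{i=1}^{⌊(k+1)/B⌋} (1 - a γ_{k-iB+2}) · Δ^0 + (2C/a) γ_{k-B+2}`. -/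
theorem stmt13
    (a C : ℝ) (ha : 0 < a) (hC : 0 ≤ C) (B : ℕ) (hB : 0 < B)
    (γ : ℤ → ℝ) (hγconv : ∀ j : ℤ, j ≤ 0 → γ j = γ 1)
    (hγpos : ∀ j, 0 < γ j) (hγmono : Antitone γ)
    (hγa : ∀ j, a * γ j ≤ 1)
    (hratio : ∀ s : ℤ, 1 ≤ s → γ (s - B) / γ s ≤ 1 + a / 2 * γ s)
    (Δ : ℕ → ℝ) (hΔ : ∀ k, 0 ≤ Δ k)
    (hrec : ∀ k : ℕ, Δ (k + 1)
      ≤ (1 - a * γ ((k : ℤ) - B + 2)) * Δ (k - B + 1) + C * γ ((k : ℤ) - B + 2) ^ 2) :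
    ∀ k : ℕ, Δ (k + 1)
      ≤ (∏ i ∈ Finset.Icc 1 ((k + 1) / B), (1 - a * γ ((k : ℤ) - (i : ℤ) * B + 2))) * Δ 0
        + 2 * C / a * γ ((k : ℤ) - B + 2) := by
  have hfac : ∀ j : ℤ, 0 ≤ 1 - a * γ j := fun j => by linarith [hγa j]
  -- Bound on Δ 1 from the recursion at k = 0.
  have hγ1 : 0 < γ 1 := hγpos 1
  have hγ0eq : γ ((0 : ℤ) - B + 2) = γ 1 := by
    rcases eq_or_lt_of_le (show 1 ≤ B from hB) with h1 | h2
    · rw [← h1]; norm_num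
    · apply hγconv; push_cast; omega
  have hΔ1 : Δ 1 ≤ C / a * γ 1 := by
    have h0 := hrec 0
    have hn : 0 - B + 1 = 1 := by omega
    rw [hn] at h0
    push_cast at h0
    rw [hγ0eq] at h0
    have := hfac ((0 : ℤ) - B + 2)
    have h1 := hΔ 1
    rw [hγ0eq] at this
    rw [div_mul_eq_mul_div, le_div_iff₀ ha]
    nlinarith
  intro k
  induction k using Nat.strong_induction_on with
  | _ k IH =>
  have hprodnn : 0 ≤ ∏ i ∈ Finset.Icc 1 ((k + 1) / B),
      (1 - a * γ ((k : ℤ) - (i : ℤ) * B + 2)) :=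
    Finset.prod_nonneg fun i _ => hfac _
  rcases lt_or_ge k B with hk | hk
  · -- base case: k < B
    have hγkeq : γ ((k : ℤ) - B + 2) = γ 1 := by
      rcases eq_or_lt_of_le (Nat.succ_le_of_lt hk) with h1 | h2
      · have : (k : ℤ) - B + 2 = 1 := by push_cast; omega
        rw [this]
      · apply hγconv; push_cast; omega
    have hn : k - B + 1 = 1 := by omega
    have hk1 := hrec k
    rw [hn, hγkeq] at hk1
    have hbound : Δ (k + 1) ≤ 2 * C / a * γ 1 := by
      have hf := hfac ((k : ℤ) - B + 2)
      rw [hγkeq] at hf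
      have h1 := hΔ 1
      have : (1 - a * γ 1) * Δ 1 ≤ (1 - a * γ 1) * (C / a * γ 1) :=
        mul_le_mul_of_nonneg_left hΔ1 hf
      have hca : C / a * γ 1 ≤ 2 * C / a * γ 1 := by
        apply mul_le_mul_of_nonneg_right _ hγ1.le
        rw [div_le_div_iff₀ ha ha]
        nlinarith
      calc Δ (k + 1) ≤ (1 - a * γ 1) * Δ 1 + C * γ 1 ^ 2 := hk1
        _ ≤ (1 - a * γ 1) * (C / a * γ 1) + C * γ 1 ^ 2 := by linarith
        _ = C / a * γ 1 - C * γ 1 ^ 2 + C * γ 1 ^ 2 := by field_simp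
        _ ≤ 2 * C / a * γ 1 := by linarith [hca]
    rw [hγkeq]
    have := mul_nonneg hprodnn (hΔ 0)
    linarith
  · -- inductive case: k ≥ B
    set k' := k - B with hk'
    have hklt : k' < k := by omega
    have hcast : (k' : ℤ) = (k : ℤ) - B := by push_cast; omega
    have hrecidx : k - B + 1 = k' + 1 := rfl
    have hq : (k + 1) / B = (k' + 1) / B + 1 := by
      have : k + 1 = (k' + 1) + B := by omega
      rw [this, Nat.add_div_right _ hB]
    have hIH := IH k' hklt
    set q' := (k' + 1) / B with hq'
    -- product identity
    have hprodeq : (∏ i ∈ Finset.Icc 1 ((k + 1) / B), (1 - a * γ ((k : ℤ) - (i : ℤ) * B + 2)))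
        = (1 - a * γ ((k : ℤ) - B + 2)) *
          ∏ i ∈ Finset.Icc 1 q', (1 - a * γ ((k' : ℤ) - (i : ℤ) * B + 2)) := by
      rw [hq, Finset.Icc_eq_cons_Ioc (Nat.le_add_left 1 q'), Finset.prod_cons]
      have hIcc : Finset.Ioc 1 (q' + 1) = (Finset.Icc 1 q').map (addRightEmbedding 1) := by
        ext x
        simp only [Finset.mem_Ioc, Finset.mem_map, Finset.mem_Icc, addRightEmbedding_apply]
        constructor
        · intro h
          exact ⟨x - 1, ⟨by omega, by omega⟩, by omega⟩
        · rintro ⟨a, ⟨h1, h2⟩, rfl⟩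
          omega
      rw [hIcc, Finset.prod_map]
      congr 1
      · congr 1
        push_cast
        ring
      · apply Finset.prod_congr rfl
        intro i _
        congr 2
        simp only [addRightEmbedding_apply]
        rw [hcast]
        push_cast
        ring
    have hg := hγpos ((k : ℤ) - B + 2)
    have hg' := hγpos ((k' : ℤ) - B + 2)
    have hf := hfac ((k : ℤ) - B + 2)
    -- ratio bound: γ (k' - B + 2) ≤ γ (k-B+2) (1 + a/2 γ(k-B+2))
    have hrat : γ ((k' : ℤ) - B + 2) ≤ γ ((k : ℤ) - B + 2) *
        (1 + a / 2 * γ ((k : ℤ) - B + 2)) := by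
      have hs : (1 : ℤ) ≤ (k : ℤ) - B + 2 := by push_cast; omega
      have := hratio ((k : ℤ) - B + 2) hs
      have heq : (k : ℤ) - B + 2 - B = (k' : ℤ) - B + 2 := by rw [hcast]; ring
      rw [heq] at this
      rw [div_le_iff₀ hg] at this
      linarith [this]
    have hrk := hrec k
    rw [hrecidx] at hrk
    -- multiply IH by (1 - a γ)
    have hstep : (1 - a * γ ((k : ℤ) - B + 2)) * Δ (k' + 1)
        ≤ (1 - a * γ ((k : ℤ) - B + 2)) *
          ((∏ i ∈ Finset.Icc 1 q', (1 - a * γ ((k' : ℤ) - (i : ℤ) * B + 2))) * Δ 0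
            + 2 * C / a * γ ((k' : ℤ) - B + 2)) :=
      mul_le_mul_of_nonneg_left hIH hf
    rw [hprodeq]
    set g := γ ((k : ℤ) - B + 2) with hgdef
    set g' := γ ((k' : ℤ) - B + 2) with hg'def
    set P := ∏ i ∈ Finset.Icc 1 q', (1 - a * γ ((k' : ℤ) - (i : ℤ) * B + 2)) with hP
    -- error term bound
    have herr : (1 - a * g) * (2 * C / a * g') + C * g ^ 2 ≤ 2 * C / a * g := by
      have h1 : (1 - a * g) * (2 * C / a * g') ≤ (1 - a * g) * (2 * C / a * (g * (1 + a / 2 * g))) := by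
        apply mul_le_mul_of_nonneg_left _ hf
        apply mul_le_mul_of_nonneg_left hrat
        positivity
      have h2 : (1 - a * g) * (2 * C / a * (g * (1 + a / 2 * g))) + C * g ^ 2
          = 2 * C / a * g - a * C * g ^ 3 := by field_simp; ring
      nlinarith [pow_pos hg 3, mul_nonneg (mul_nonneg ha.le hC) (pow_pos hg 3).le]
    calc Δ (k + 1) ≤ (1 - a * g) * Δ (k' + 1) + C * g ^ 2 := hrk
      _ ≤ (1 - a * g) * (P * Δ 0 + 2 * C / a * g') + C * g ^ 2 := by linarith [hstep]
      _ = (1 - a * g) * P * Δ 0 + ((1 - a * g) * (2 * C / a * g') + C * g ^ 2) := by ring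
      _ ≤ (1 - a * g) * P * Δ 0 + 2 * C / a * g := by linarith [herr]
end
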